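/- Let F : ℝⁿ → ℝⁿ be Lipschitz continuous with constant β ≥ 0 and bounded with ‖F(y)‖ ≤ M for all y ∈ ℝⁿ. Let h > 0 and let x : [0, h] → ℝⁿ be differentiable with x'(s) = F(x(s)) for all s ∈ [0, h]. Then ‖x(h) − x(0) − ∫₀ʰ F(x(0) + (s/h)(x(h) − x(0))) ds‖ ≤ β²·M·h³/12. -/

import Mathlib

open Set intervalIntegral

/-- replacing the exact trajectory by its secant in the integral form
of the ODE introduces only a third-order error. -/
theorem stmt_4 (n : ℕ) (F : (Fin n → ℝ) → (Fin n → ℝ)) (β M : ℝ)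
    (hβ : 0 ≤ β) (hlip : ∀ y z : Fin n → ℝ, ‖F y - F z‖ ≤ β * ‖y - z‖)
    (hbdd : ∀ y : Fin n → ℝ, ‖F y‖ ≤ M)
    (h : ℝ) (hh : 0 < h) (x : ℝ → (Fin n → ℝ))
    (hderiv : ∀ s ∈ Icc (0 : ℝ) h, HasDerivWithinAt x (F (x s)) (Icc (0 : ℝ) h) s) :
    ‖x h - x 0 - ∫ s in (0 : ℝ)..h, F (x 0 + (s / h) • (x h - x 0))‖ ≤
      β ^ 2 * M * h ^ 3 / 12 := by
  have hM0 : 0 ≤ M := le_trans (norm_nonneg _) (hbdd (x 0))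
  -- F is continuous
  have hFcont : Continuous F := by
    refine (LipschitzWith.of_dist_le_mul (K := ⟨β, hβ⟩) fun y z => ?_).continuous
    rw [dist_eq_norm, dist_eq_norm]; exact hlip y z
  -- x is continuous on Icc 0 h
  have hxc : ContinuousOn x (Icc 0 h) := fun s hs => (hderiv s hs).continuousWithinAt
  -- integrability of F ∘ x on subintervals
  have hFxint : ∀ a ∈ Icc (0:ℝ) h, ∀ b ∈ Icc (0:ℝ) h, a ≤ b →
      IntervalIntegrable (fun t => F (x t)) MeasureTheory.volume a b := by
    intro a ha b hb hab
    exact ((hFcont.comp_continuousOn (hxc.mono (Icc_subset_Icc ha.1 hb.2))).intervalIntegrable_of_Icc hab)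
  -- FTC on subintervals
  have hftc : ∀ a ∈ Icc (0:ℝ) h, ∀ b ∈ Icc (0:ℝ) h, a ≤ b →
      (∫ t in a..b, F (x t)) = x b - x a := by
    intro a ha b hb hab
    refine integral_eq_sub_of_hasDeriv_right_of_le hab (hxc.mono (Icc_subset_Icc ha.1 hb.2))
      (fun t ht => ?_) (hFxint a ha b hb hab)
    have ht' : t ∈ Ioo (0:ℝ) h := ⟨lt_of_le_of_lt ha.1 ht.1, lt_of_lt_of_le ht.2 hb.2⟩
    exact ((hderiv t (Ioo_subset_Icc_self ht')).hasDerivAt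
      (Icc_mem_nhds ht'.1 ht'.2)).hasDerivWithinAt
  -- Lipschitz-in-time bound for F ∘ x
  have hFx : ∀ t ∈ Icc (0:ℝ) h, ∀ s ∈ Icc (0:ℝ) h, t ≤ s →
      ‖F (x t) - F (x s)‖ ≤ β * (M * (s - t)) := by
    intro t ht s hs hts
    have hx : ‖x s - x t‖ ≤ M * |s - t| := by
      rw [← hftc t ht s hs hts]
      exact intervalIntegral.norm_integral_le_of_norm_le_const
        (fun u hu => hbdd (x u))
    have : ‖F (x t) - F (x s)‖ ≤ β * ‖x t - x s‖ := hlip _ _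
    calc ‖F (x t) - F (x s)‖ ≤ β * ‖x t - x s‖ := hlip _ _
      _ = β * ‖x s - x t‖ := by rw [norm_sub_rev]
      _ ≤ β * (M * (s - t)) := by
          refine mul_le_mul_of_nonneg_left ?_ hβ
          rwa [abs_of_nonneg (sub_nonneg.mpr hts)] at hx
  -- the key secant deviation bound
  have gbound : ∀ s ∈ Icc (0:ℝ) h,
      ‖x s - x 0 - (s / h) • (x h - x 0)‖ ≤ β * M * (s * (h - s)) / 2 := by
    intro s hs
    obtain ⟨hs0, hsh⟩ := hs
    have h0 : (0:ℝ) ∈ Icc (0:ℝ) h := ⟨le_refl _, hh.le⟩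
    have hhm : h ∈ Icc (0:ℝ) h := ⟨hh.le, le_refl _⟩
    have hsm : s ∈ Icc (0:ℝ) h := ⟨hs0, hsh⟩
    set A := ∫ t in (0:ℝ)..s, F (x t) with hA
    set B := ∫ t in s..h, F (x t) with hB
    have hA' : A = x s - x 0 := hftc 0 h0 s hsm hs0
    have hB' : B = x h - x s := hftc s hsm h hhm hsh
    have hAB : x h - x 0 = A + B := by rw [hA', hB']; abel
    have hint1 : IntervalIntegrable (fun t => F (x t) - F (x s)) MeasureTheory.volume 0 s :=
      (hFxint 0 h0 s hsm hs0).sub (intervalIntegrable_const)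
    have hint2 : IntervalIntegrable (fun t => F (x t) - F (x s)) MeasureTheory.volume s h :=
      (hFxint s hsm h hhm hsh).sub (intervalIntegrable_const)
    have e1 : (∫ t in (0:ℝ)..s, (F (x t) - F (x s))) = A - s • F (x s) := by
      rw [intervalIntegral.integral_sub (hFxint 0 h0 s hsm hs0) intervalIntegrable_const,
        intervalIntegral.integral_const]
      simp [hA]
    have e2 : (∫ t in s..h, (F (x t) - F (x s))) = B - (h - s) • F (x s) := by
      rw [intervalIntegral.integral_sub (hFxint s hsm h hhm hsh) intervalIntegrable_const,
        intervalIntegral.integral_const]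
    have hcoef : (1 - s / h) * s = (s / h) * (h - s) := by
      field_simp
    have key : x s - x 0 - (s / h) • (x h - x 0)
        = (1 - s / h) • (∫ t in (0:ℝ)..s, (F (x t) - F (x s)))
          - (s / h) • (∫ t in s..h, (F (x t) - F (x s))) := by
      rw [e1, e2, hAB, ← hA']
      have expand : (1 - s / h) • (A - s • F (x s)) - (s / h) • (B - (h - s) • F (x s))
          = (1 - s / h) • A - (s / h) • B
            - ((1 - s / h) * s - (s / h) * (h - s)) • F (x s) := by
        module
      rw [expand, hcoef, sub_self, zero_smul, sub_zero]
      module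
    -- bound the two integrals
    have b1 : ‖∫ t in (0:ℝ)..s, (F (x t) - F (x s))‖ ≤ β * M * s ^ 2 / 2 := by
      have hle : ‖∫ t in (0:ℝ)..s, (F (x t) - F (x s))‖
          ≤ |∫ t in (0:ℝ)..s, β * (M * (s - t))| := by
        refine intervalIntegral.norm_integral_le_abs_of_norm_le ?_ ?_
        · refine MeasureTheory.ae_restrict_of_forall_mem measurableSet_uIoc fun t ht => ?_
          rw [uIoc_of_le hs0] at ht
          exact hFx t ⟨ht.1.le, ht.2.trans hsh⟩ s hsm ht.2
        · exact ((continuous_const.mul (continuous_const.mul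
            (continuous_const.sub continuous_id))).intervalIntegrable _ _)
      have hval : (∫ t in (0:ℝ)..s, β * (M * (s - t))) = β * M * s ^ 2 / 2 := by
        have hrw : ∀ t : ℝ, β * (M * (s - t)) = β * M * s - β * M * t := fun t => by ring
        simp_rw [hrw]
        have hi : IntervalIntegrable (fun t : ℝ => β * M * t) MeasureTheory.volume 0 s :=
          (continuous_const.mul continuous_id).intervalIntegrable _ _
        rw [intervalIntegral.integral_sub intervalIntegrable_const hi,
          intervalIntegral.integral_const, intervalIntegral.integral_const_mul,
          integral_id, smul_eq_mul]
        ring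
      rw [hval] at hle
      refine hle.trans (le_of_eq (abs_of_nonneg ?_))
      positivity
    have b2 : ‖∫ t in s..h, (F (x t) - F (x s))‖ ≤ β * M * (h - s) ^ 2 / 2 := by
      have hle : ‖∫ t in s..h, (F (x t) - F (x s))‖
          ≤ |∫ t in s..h, β * (M * (t - s))| := by
        refine intervalIntegral.norm_integral_le_abs_of_norm_le ?_ ?_
        · refine MeasureTheory.ae_restrict_of_forall_mem measurableSet_uIoc fun t ht => ?_
          rw [uIoc_of_le hsh] at ht
          have := hFx s hsm t ⟨hs0.trans ht.1.le, ht.2⟩ ht.1.le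
          rwa [norm_sub_rev] at this
        · exact ((continuous_const.mul (continuous_const.mul
            (continuous_id.sub continuous_const))).intervalIntegrable _ _)
      have hval : (∫ t in s..h, β * (M * (t - s))) = β * M * (h - s) ^ 2 / 2 := by
        have hrw : ∀ t : ℝ, β * (M * (t - s)) = β * M * t - β * M * s := fun t => by ring
        simp_rw [hrw]
        have hi : IntervalIntegrable (fun t : ℝ => β * M * t) MeasureTheory.volume s h :=
          (continuous_const.mul continuous_id).intervalIntegrable _ _
        rw [intervalIntegral.integral_sub hi intervalIntegrable_const,
          intervalIntegral.integral_const, intervalIntegral.integral_const_mul,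
          integral_id, smul_eq_mul]
        ring
      rw [hval] at hle
      refine hle.trans (le_of_eq (abs_of_nonneg ?_))
      positivity
    have h1 : (0:ℝ) ≤ 1 - s / h := by
      have : s / h ≤ 1 := (div_le_one hh).mpr hsh
      linarith
    have h2 : (0:ℝ) ≤ s / h := div_nonneg hs0 hh.le
    calc ‖x s - x 0 - (s / h) • (x h - x 0)‖
        ≤ ‖(1 - s / h) • (∫ t in (0:ℝ)..s, (F (x t) - F (x s)))‖
          + ‖(s / h) • (∫ t in s..h, (F (x t) - F (x s)))‖ := by
          rw [key]; exact norm_sub_le _ _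
      _ = (1 - s / h) * ‖∫ t in (0:ℝ)..s, (F (x t) - F (x s))‖
          + (s / h) * ‖∫ t in s..h, (F (x t) - F (x s))‖ := by
          rw [norm_smul, norm_smul, Real.norm_eq_abs, Real.norm_eq_abs,
            abs_of_nonneg h1, abs_of_nonneg h2]
      _ ≤ (1 - s / h) * (β * M * s ^ 2 / 2) + (s / h) * (β * M * (h - s) ^ 2 / 2) := by
          gcongr
      _ = β * M * (s * (h - s)) / 2 := by
          field_simp
          ring
  -- final assembly
  have h0 : (0:ℝ) ∈ Icc (0:ℝ) h := ⟨le_refl _, hh.le⟩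
  have hhm : h ∈ Icc (0:ℝ) h := ⟨hh.le, le_refl _⟩
  have hσint : IntervalIntegrable (fun s => F (x 0 + (s / h) • (x h - x 0)))
      MeasureTheory.volume 0 h := by
    exact (hFcont.comp (by fun_prop)).intervalIntegrable _ _
  have hsplit : x h - x 0 - (∫ s in (0:ℝ)..h, F (x 0 + (s / h) • (x h - x 0)))
      = ∫ s in (0:ℝ)..h, (F (x s) - F (x 0 + (s / h) • (x h - x 0))) := by
    rw [intervalIntegral.integral_sub (hFxint 0 h0 h hhm hh.le) hσint,
      hftc 0 h0 h hhm hh.le]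
  rw [hsplit]
  have hle : ‖∫ s in (0:ℝ)..h, (F (x s) - F (x 0 + (s / h) • (x h - x 0)))‖
      ≤ |∫ s in (0:ℝ)..h, β * (β * M * (s * (h - s)) / 2)| := by
    refine intervalIntegral.norm_integral_le_abs_of_norm_le ?_ ?_
    · refine MeasureTheory.ae_restrict_of_forall_mem measurableSet_uIoc fun s hs => ?_
      rw [uIoc_of_le hh.le] at hs
      have hsm : s ∈ Icc (0:ℝ) h := ⟨hs.1.le, hs.2⟩
      calc ‖F (x s) - F (x 0 + (s / h) • (x h - x 0))‖
          ≤ β * ‖x s - (x 0 + (s / h) • (x h - x 0))‖ := hlip _ _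
        _ = β * ‖x s - x 0 - (s / h) • (x h - x 0)‖ := by rw [sub_add_eq_sub_sub]
        _ ≤ β * (β * M * (s * (h - s)) / 2) :=
            mul_le_mul_of_nonneg_left (gbound s hsm) hβ
    · exact ((continuous_const.mul ((continuous_const.mul
        (continuous_id.mul (continuous_const.sub continuous_id))).div_const 2)).intervalIntegrable _ _)
  have hval : (∫ s in (0:ℝ)..h, β * (β * M * (s * (h - s)) / 2))
      = β ^ 2 * M * h ^ 3 / 12 := by
    have : (fun s => β * (β * M * (s * (h - s)) / 2))
        = fun s => (β ^ 2 * M / 2) * (s * h) - (β ^ 2 * M / 2) * s ^ 2 := by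
      funext s; ring
    rw [this]
    have hi1 : IntervalIntegrable (fun s : ℝ => β ^ 2 * M / 2 * (s * h)) MeasureTheory.volume 0 h :=
      (continuous_const.mul (continuous_id.mul continuous_const)).intervalIntegrable _ _
    have hi2 : IntervalIntegrable (fun s : ℝ => β ^ 2 * M / 2 * s ^ 2) MeasureTheory.volume 0 h :=
      (continuous_const.mul (continuous_pow 2)).intervalIntegrable _ _
    rw [intervalIntegral.integral_sub hi1 hi2,
      intervalIntegral.integral_const_mul, intervalIntegral.integral_const_mul,
      intervalIntegral.integral_mul_const, integral_id,
      integral_pow]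
    norm_num
    ring
  rw [hval] at hle
  refine hle.trans (le_of_eq (abs_of_nonneg ?_))
  positivity
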